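/- Let R be a commutative ring, S a multiplicative subset of R, P a u-S-pseudo-projective R-module, and K a submodule of P such that the quotient P/K is isomorphic (as an R-module) to a direct summand of P. Then K is a u-S-direct summand of P; that is, there exist an R-module N' and a u-S-isomorphism between P and K ⊕ N'. -/

import Mathlib

/-!  Definitions for uniformly-S-pseudo-projective modules
(M. Adarbeh, M. Saleh, "Uniformly-S-pseudo-projective modules"). -/

universe u v w

/-- `S` is a multiplicative subset of the commutative ring `R`:
`1 ∈ S`, `0 ∉ S`, and `S` is closed under multiplication. -/
def IsMultSubset {R : Type u} [CommRing R] (S : Set R) : Prop :=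
  1 ∈ S ∧ (0 : R) ∉ S ∧ ∀ ⦃a b : R⦄, a ∈ S → b ∈ S → a * b ∈ S

/-- An `R`-module `T` is `u`-`S`-torsion if some `s ∈ S` annihilates it. -/
def IsUSTorsion {R : Type u} [CommRing R] (S : Set R) (T : Type v) [AddCommGroup T]
    [Module R T] : Prop :=
  ∃ s ∈ S, ∀ t : T, s • t = 0

/-- `f` is a `u`-`S`-monomorphism: its kernel is `u`-`S`-torsion. -/
def IsUSMono {R : Type u} [CommRing R] (S : Set R) {M : Type v} {N : Type w}
    [AddCommGroup M] [Module R M] [AddCommGroup N] [Module R N] (f : M →ₗ[R] N) : Prop :=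
  ∃ s ∈ S, ∀ m ∈ LinearMap.ker f, s • m = (0 : M)

/-- `f` is a `u`-`S`-epimorphism: its cokernel is `u`-`S`-torsion. -/
def IsUSEpi {R : Type u} [CommRing R] (S : Set R) {M : Type v} {N : Type w}
    [AddCommGroup M] [Module R M] [AddCommGroup N] [Module R N] (f : M →ₗ[R] N) : Prop :=
  ∃ s ∈ S, ∀ n : N, s • n ∈ LinearMap.range f

/-- `f` is a `u`-`S`-isomorphism: both a `u`-`S`-monomorphism and a `u`-`S`-epimorphism. -/
def IsUSIso {R : Type u} [CommRing R] (S : Set R) {M : Type v} {N : Type w}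
    [AddCommGroup M] [Module R M] [AddCommGroup N] [Module R N] (f : M →ₗ[R] N) : Prop :=
  IsUSMono S f ∧ IsUSEpi S f

/-- `P` is `u`-`S`-pseudo-projective: for every submodule `K` of `P` there is `s ∈ S` such that
every `u`-`S`-epimorphism `f : P → P/K` satisfies `s • f = π_K ∘ g` for some endomorphism
`g` of `P`. -/
def IsUSPseudoProjective {R : Type u} [CommRing R] (S : Set R) (P : Type v)
    [AddCommGroup P] [Module R P] : Prop :=
  ∀ K : Submodule R P, ∃ s ∈ S, ∀ f : P →ₗ[R] P ⧸ K, IsUSEpi S f →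
    ∃ g : P →ₗ[R] P, s • f = K.mkQ.comp g

/-- `M` is `u`-`S`-quasi-projective. -/
def IsUSQuasiProjective {R : Type u} [CommRing R] (S : Set R) (M : Type v)
    [AddCommGroup M] [Module R M] : Prop :=
  ∀ K : Submodule R M, ∃ s ∈ S, ∀ f : M →ₗ[R] M ⧸ K,
    ∃ g : M →ₗ[R] M, s • f = K.mkQ.comp g

/-- `Q` is `u`-`S`-projective (test modules in `Type v₁`). -/
def IsUSProjective.{u₁, v₁, w₁} {R : Type u₁} [CommRing R] (S : Set R) (Q : Type w₁)
    [AddCommGroup Q] [Module R Q] : Prop :=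
  ∀ (B C : Type v₁) [AddCommGroup B] [AddCommGroup C] [Module R B] [Module R C]
    (g : B →ₗ[R] C), IsUSEpi S g →
      ∃ s ∈ S, ∀ h : Q →ₗ[R] C, ∃ h' : Q →ₗ[R] B, s • h = g.comp h'

/-- `M` is `u`-`S`-injective (test modules in `Type v₁`). -/
def IsUSInjective.{u₁, v₁, w₁} {R : Type u₁} [CommRing R] (S : Set R) (M : Type w₁)
    [AddCommGroup M] [Module R M] : Prop :=
  ∀ (A B : Type v₁) [AddCommGroup A] [AddCommGroup B] [Module R A] [Module R B]
    (f : A →ₗ[R] B), IsUSMono S f →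
      ∃ s ∈ S, ∀ h : A →ₗ[R] M, ∃ h' : B →ₗ[R] M, s • h = h'.comp f

/-- `E` is `u`-`S`-pseudo-injective. -/
def IsUSPseudoInjective {R : Type u} [CommRing R] (S : Set R) (E : Type v)
    [AddCommGroup E] [Module R E] : Prop :=
  ∀ K : Submodule R E, ∃ s ∈ S, ∀ f : ↥K →ₗ[R] E, IsUSMono S f →
    ∃ g : E →ₗ[R] E, g.comp K.subtype = s • f

/-- The sequence `0 → A →f B →g C → 0` is short `u`-`S`-exact. -/
def IsShortUSExact {R : Type u} [CommRing R] (S : Set R) {A B C : Type v}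
    [AddCommGroup A] [Module R A] [AddCommGroup B] [Module R B] [AddCommGroup C] [Module R C]
    (f : A →ₗ[R] B) (g : B →ₗ[R] C) : Prop :=
  IsUSMono S f ∧ IsUSEpi S g ∧
    ∃ s ∈ S, (∀ x ∈ LinearMap.ker g, s • x ∈ LinearMap.range f) ∧
      (∀ x ∈ LinearMap.range f, s • x ∈ LinearMap.ker g)

/-- The short `u`-`S`-exact sequence `0 → A →f B →g C → 0` is `u`-`S`-split:
some multiple `s • 1_A` of the identity factors back through `f`. -/
def IsUSSplitSeq {R : Type u} [CommRing R] (S : Set R) {A B : Type v}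
    [AddCommGroup A] [Module R A] [AddCommGroup B] [Module R B] (f : A →ₗ[R] B) : Prop :=
  ∃ s ∈ S, ∃ f' : B →ₗ[R] A, f'.comp f = s • (LinearMap.id : A →ₗ[R] A)

/-- `M` is a `u`-`S`-semisimple module (test sequences with modules in `Type v₁`). -/
def IsUSSemisimpleModule.{u₁, v₁} {R : Type u₁} [CommRing R] (S : Set R) (M : Type v₁)
    [AddCommGroup M] [Module R M] : Prop :=
  ∀ (A C : Type v₁) [AddCommGroup A] [AddCommGroup C] [Module R A] [Module R C]
    (f : A →ₗ[R] M) (g : M →ₗ[R] C), IsShortUSExact S f g → IsUSSplitSeq S f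

/-- `R` is a `u`-`S`-semisimple ring: every free `R`-module is `u`-`S`-semisimple. -/
def IsUSSemisimpleRing.{u₁, v₁} {R : Type u₁} [CommRing R] (S : Set R) : Prop :=
  ∀ (F : Type v₁) [AddCommGroup F] [Module R F], Module.Free R F →
    IsUSSemisimpleModule.{u₁, v₁} S F

/-- A submodule `N` of `M` is a `u`-`S`-direct summand of `M` if there is an `R`-module `N'`
and a `u`-`S`-isomorphism between `M` and `N ⊕ N'`. -/
def IsUSDirectSummand {R : Type u} [CommRing R] (S : Set R) {M : Type v}
    [AddCommGroup M] [Module R M] (N : Submodule R M) : Prop :=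
  ∃ (N' : ModuleCat.{v} R) (h : M →ₗ[R] (↥N × ↥N')), IsUSIso S h

/-- `A` is `u`-`S`-projective relative to `B`. -/
def IsUSProjectiveRel {R : Type u} [CommRing R] (S : Set R) (A : Type v) (B : Type w)
    [AddCommGroup A] [Module R A] [AddCommGroup B] [Module R B] : Prop :=
  ∀ K : Submodule R B, ∃ s ∈ S, ∀ f : A →ₗ[R] B ⧸ K,
    ∃ h : A →ₗ[R] B, s • f = K.mkQ.comp h

/-- If `P` is `u`-`S`-pseudo-projective and `K ≤ P` is such that `P/K` is isomorphic to a
direct summand of `P`, then `K` is a `u`-`S`-direct summand of `P`. -/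
theorem uSDirectSummand_of_quotient_iso_directSummand
    {R : Type u} [CommRing R] (S : Set R) (hS : IsMultSubset S)
    {P : Type v} [AddCommGroup P] [Module R P] (hP : IsUSPseudoProjective S P)
    (K : Submodule R P)
    (h : ∃ A A' : Submodule R P, IsCompl A A' ∧ Nonempty ((P ⧸ K) ≃ₗ[R] ↥A)) :
    IsUSDirectSummand S K := by
  obtain ⟨A, A', hcompl, ⟨e⟩⟩ := h
  obtain ⟨s, hs, hlift⟩ := hP K
  set p : P →ₗ[R] ↥A := A.projectionOnto A' hcompl with hp
  set q : P →ₗ[R] P ⧸ K := e.symm.toLinearMap.comp p with hq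
  have hq_surj : ∀ y : P ⧸ K, q (↑(e y)) = y := by
    intro y
    simp [hq, hp, Submodule.projectionOnto_apply_left]
  have hq_epi : IsUSEpi S q := ⟨1, hS.1, fun y => ⟨↑(e y), by rw [hq_surj, one_smul]⟩⟩
  obtain ⟨g, hg⟩ := hlift q hq_epi
  set j : (P ⧸ K) →ₗ[R] P := g.comp (A.subtype.comp e.toLinearMap) with hjdef
  have hj : ∀ y : P ⧸ K, K.mkQ (j y) = s • y := by
    intro y
    have h1 := congrArg (fun φ : P →ₗ[R] P ⧸ K => φ (A.subtype (e.toLinearMap y))) hg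
    simp only [LinearMap.smul_apply, LinearMap.comp_apply] at h1
    have h2 : q (A.subtype (e.toLinearMap y)) = y := hq_surj y
    rw [h2] at h1
    simpa [hjdef] using h1.symm
  have hmem : ∀ x : P, s • x - j (K.mkQ x) ∈ K := by
    intro x
    have h0 : K.mkQ (s • x - j (K.mkQ x)) = 0 := by
      rw [map_sub, map_smul, hj, sub_self]
    rwa [Submodule.mkQ_apply, Submodule.Quotient.mk_eq_zero] at h0
  set φ : P →ₗ[R] P := s • LinearMap.id - j.comp K.mkQ with hφ
  have hφapp : ∀ x : P, φ x = s • x - j (K.mkQ x) := fun x => rfl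
  set h1 : P →ₗ[R] ↥K := LinearMap.codRestrict K φ (fun x => hmem x) with hh1
  set hmap : P →ₗ[R] ↥K × (P ⧸ K) := LinearMap.prod h1 (s • K.mkQ) with hhmap
  refine ⟨ModuleCat.of R (P ⧸ K), hmap, ?_, ?_⟩
  · refine ⟨s * s, hS.2.2 hs hs, fun m hm => ?_⟩
    rw [LinearMap.mem_ker] at hm
    have hm1 : h1 m = 0 := congrArg Prod.fst hm
    have hm2 : s • K.mkQ m = 0 := by
      have := congrArg Prod.snd hm
      simpa [hhmap] using this
    have hm1' : s • m - j (K.mkQ m) = 0 := congrArg Subtype.val hm1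
    have hm1'' : s • m = j (K.mkQ m) := sub_eq_zero.mp hm1'
    calc (s * s) • m = s • (s • m) := by rw [mul_smul]
      _ = s • j (K.mkQ m) := by rw [hm1'']
      _ = j (s • K.mkQ m) := (map_smul j s _).symm
      _ = j 0 := by rw [hm2]
      _ = 0 := map_zero j
  · refine ⟨s * s, hS.2.2 hs hs, fun n => ?_⟩
    obtain ⟨k, y⟩ := n
    have hmk : K.mkQ (k : P) = 0 := (Submodule.Quotient.mk_eq_zero K).mpr k.2
    have hmkx : K.mkQ (s • (k : P) + j y) = s • y := by
      rw [map_add, map_smul, hmk, smul_zero, zero_add, hj]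
    have hfst : φ (s • (k : P) + j y) = (s * s) • (k : P) := by
      rw [hφapp, hmkx, map_smul, smul_add, mul_smul]
      abel
    refine ⟨s • (k : P) + j y, Prod.ext (Subtype.ext ?_) ?_⟩
    · show φ (s • (k : P) + j y) = ((s * s) • k : ↥K)
      rw [hfst]; rfl
    · show s • K.mkQ (s • (k : P) + j y) = (s * s) • y
      rw [hmkx, mul_smul]
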